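/- For the four-compartment acetone model with constant inputs, every complex eigenvalue of the 4×4 system matrix A has nonpositive real part; moreover, if det A ≠ 0, then every eigenvalue of A has strictly negative real part. -/

import Mathlib

open Set Matrix Finset

/-- Gershgorin-type lemma: if `M` has nonnegative off-diagonal entries and nonpositive
weighted column sums (weights `w > 0`), then any eigenvalue `μ` of `Mᵀ` (complexified,
expressed via the eigenvector equation) satisfies `μ.re ≤ 0`, and `μ.re = 0 → μ = 0`. -/
lemma metzler_column_dominant_eigen_re_nonpos {n : ℕ} (M : Matrix (Fin n) (Fin n) ℝ) (w : Fin n → ℝ)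
    (hw : ∀ i, 0 < w i) (hoff : ∀ i j, i ≠ j → 0 ≤ M i j)
    (hcol : ∀ j, ∑ i, w i * M i j ≤ 0)
    (μ : ℂ) (u : Fin n → ℂ) (hu : u ≠ 0)
    (heig : ∀ i, ∑ j, (M j i : ℂ) * u j = μ * u i) :
    μ.re ≤ 0 ∧ (μ.re = 0 → μ = 0) := by
  obtain ⟨k, hk⟩ := Function.ne_iff.mp hu
  obtain ⟨i, -, hmax⟩ := Finset.exists_max_image Finset.univ (fun j => ‖u j‖ / w j)
    ⟨k, Finset.mem_univ k⟩
  have hui : 0 < ‖u i‖ := by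
    have h1 : 0 < ‖u k‖ / w k := div_pos (norm_pos_iff.mpr hk) (hw k)
    have h2 : 0 < ‖u i‖ / w i := lt_of_lt_of_le h1 (hmax k (Finset.mem_univ k))
    have := mul_pos h2 (hw i)
    rwa [div_mul_cancel₀ _ (hw i).ne'] at this
  have hrow := heig i
  have hsplit : (μ - (M i i : ℂ)) * u i = ∑ j ∈ Finset.univ.erase i, (M j i : ℂ) * u j := by
    have h := (Finset.add_sum_erase _ (fun j => (M j i : ℂ) * u j) (Finset.mem_univ i)).symm
    rw [h] at hrow
    linear_combination -hrow
  have hnorm : ‖μ - (M i i : ℂ)‖ * ‖u i‖ ≤ ∑ j ∈ Finset.univ.erase i, M j i * ‖u j‖ := by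
    rw [← norm_mul, hsplit]
    refine (norm_sum_le _ _).trans (Finset.sum_le_sum fun j hj => ?_)
    rw [norm_mul, Complex.norm_real, Real.norm_of_nonneg (hoff j i (Finset.mem_erase.mp hj).1)]
  have hsum2 : ∑ j ∈ Finset.univ.erase i, M j i * ‖u j‖ ≤
      (∑ j ∈ Finset.univ.erase i, M j i * w j) * (‖u i‖ / w i) := by
    rw [Finset.sum_mul]
    refine Finset.sum_le_sum fun j hj => ?_
    have h0 : 0 ≤ M j i := hoff j i (Finset.mem_erase.mp hj).1
    have h1 : ‖u j‖ ≤ w j * (‖u i‖ / w i) := by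
      calc ‖u j‖ = ‖u j‖ / w j * w j := by rw [div_mul_cancel₀ _ (hw j).ne']
        _ ≤ ‖u i‖ / w i * w j := by
            exact mul_le_mul_of_nonneg_right (hmax j (Finset.mem_univ j)) (hw j).le
        _ = w j * (‖u i‖ / w i) := by ring
    calc M j i * ‖u j‖ ≤ M j i * (w j * (‖u i‖ / w i)) := by
          exact mul_le_mul_of_nonneg_left h1 h0
      _ = M j i * w j * (‖u i‖ / w i) := by ring
  have hc : ∑ j ∈ Finset.univ.erase i, M j i * w j ≤ -(w i * M i i) := by
    have h := hcol i
    rw [← Finset.add_sum_erase _ (fun j => w j * M j i) (Finset.mem_univ i)] at h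
    have he : ∑ j ∈ Finset.univ.erase i, M j i * w j
        = ∑ j ∈ Finset.univ.erase i, w j * M j i :=
      Finset.sum_congr rfl fun j _ => mul_comm _ _
    rw [he]; linarith
  have hfrac : 0 ≤ ‖u i‖ / w i := div_nonneg hui.le (hw i).le
  have hchain : ‖μ - (M i i : ℂ)‖ * ‖u i‖ ≤ -M i i * ‖u i‖ := by
    have h3 : (∑ j ∈ Finset.univ.erase i, M j i * w j) * (‖u i‖ / w i)
        ≤ -(w i * M i i) * (‖u i‖ / w i) := mul_le_mul_of_nonneg_right hc hfrac
    have hwi := (hw i).ne'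
    have h4 : -(w i * M i i) * (‖u i‖ / w i) = -M i i * ‖u i‖ := by
      field_simp
    linarith
  have hkey : ‖μ - (M i i : ℂ)‖ ≤ -M i i := le_of_mul_le_mul_right (by linarith) hui
  have hre : |μ.re - M i i| ≤ -M i i := by
    have h := Complex.abs_re_le_norm (μ - (M i i : ℂ))
    simpa [Complex.sub_re, Complex.ofReal_re] using le_trans h hkey
  constructor
  · have := (abs_le.mp hre).2
    linarith
  · intro h0
    have hsq : ‖μ - (M i i : ℂ)‖ ^ 2 ≤ (M i i) ^ 2 := by
      have hnn : (0:ℝ) ≤ -M i i := le_trans (norm_nonneg _) hkey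
      nlinarith [norm_nonneg (μ - (M i i : ℂ))]
    have hns : Complex.normSq (μ - (M i i : ℂ)) ≤ (M i i)^2 := by
      rw [← Complex.sq_norm]; exact hsq
    rw [Complex.normSq_apply] at hns
    have : (μ - (M i i : ℂ)).re * (μ - (M i i : ℂ)).re
        + (μ - (M i i : ℂ)).im * (μ - (M i i : ℂ)).im ≤ (M i i)^2 := hns
    simp [Complex.sub_re, Complex.sub_im, Complex.ofReal_re, Complex.ofReal_im, h0] at this
    have him : μ.im = 0 := by nlinarith
    exact Complex.ext h0 him

/-- Right-hand side of the four-compartment acetone model (constant inputs): the state is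
`c = (C_bro, C_A, C_liv, C_tis)` (indices `0,1,2,3`). -/
noncomputable def acetoneRHS (Vbro VA Vliv Vtis lba lma lmb lbl lbt kpr kmet qbro qliv
    VdA Qc D CI : ℝ) (c : Fin 4 → ℝ) : Fin 4 → ℝ :=
  ![(VdA * (CI - c 0) + D * (c 1 - c 0) +
      qbro * Qc * (((1 - qbro) * lba * c 1 + qbro * (lma / lmb) * c 0) - (lma / lmb) * c 0)) / Vbro,
    (D * (c 0 - c 1) +
      (1 - qbro) * Qc * ((qliv * lbl * c 2 + (1 - qliv) * lbt * c 3) - lba * c 1)) / VA,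
    (kpr - kmet * lbl * c 2 +
      qliv * (1 - qbro) * Qc * (((1 - qbro) * lba * c 1 + qbro * (lma / lmb) * c 0)
        - lbl * c 2)) / Vliv,
    ((1 - qliv) * (1 - qbro) * Qc * (((1 - qbro) * lba * c 1 + qbro * (lma / lmb) * c 0)
        - lbt * c 3)) / Vtis]

set_option maxHeartbeats 2000000 in
/-- For the four-compartment acetone model with constant inputs, every complex
eigenvalue of the `4×4` system matrix `A` (the coefficient matrix of the homogeneous part,
so that the system reads `ċ = A c + b`) has nonpositive real part; moreover, if `det A ≠ 0`,
then every eigenvalue of `A` has strictly negative real part. -/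
theorem acetone_system_matrix_stable
    (Vbro VA Vliv Vtis lba lma lmb lbl lbt kpr kmet qbro qliv VdA Qc D CI : ℝ)
    (hVbro : 0 < Vbro) (hVA : 0 < VA) (hVliv : 0 < Vliv) (hVtis : 0 < Vtis)
    (hlba : 0 < lba) (hlma : 0 < lma) (hlmb : 0 < lmb) (hlbl : 0 < lbl) (hlbt : 0 < lbt)
    (hVdA : 0 ≤ VdA) (hQc : 0 ≤ Qc) (hD : 0 ≤ D) (hkpr : 0 ≤ kpr) (hkmet : 0 ≤ kmet)
    (hqbro0 : 0 ≤ qbro) (hqbro1 : qbro < 1) (hqliv0 : 0 < qliv) (hqliv1 : qliv < 1)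
    (A : Matrix (Fin 4) (Fin 4) ℝ) (b : Fin 4 → ℝ)
    (hAb : ∀ x : Fin 4 → ℝ, A *ᵥ x + b =
      acetoneRHS Vbro VA Vliv Vtis lba lma lmb lbl lbt kpr kmet qbro qliv VdA Qc D CI x) :
    (∀ μ : ℂ, (∃ v : Fin 4 → ℂ, v ≠ 0 ∧ (A.map Complex.ofReal) *ᵥ v = μ • v) → μ.re ≤ 0) ∧
    (A.det ≠ 0 →
      ∀ μ : ℂ, (∃ v : Fin 4 → ℂ, v ≠ 0 ∧ (A.map Complex.ofReal) *ᵥ v = μ • v) → μ.re < 0) := by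
  -- Identify the matrix `A` explicitly from `hAb`.
  have hb : b = acetoneRHS Vbro VA Vliv Vtis lba lma lmb lbl lbt kpr kmet qbro qliv VdA Qc D CI 0 := by
    have := hAb 0
    rwa [Matrix.mulVec_zero, zero_add] at this
  have hent : ∀ i j, A i j =
      acetoneRHS Vbro VA Vliv Vtis lba lma lmb lbl lbt kpr kmet qbro qliv VdA Qc D CI (Pi.single j 1) i
      - acetoneRHS Vbro VA Vliv Vtis lba lma lmb lbl lbt kpr kmet qbro qliv VdA Qc D CI 0 i := by
    intro i j
    have h := congrFun (hAb (Pi.single j 1)) i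
    rw [Matrix.mulVec_single_one] at h
    simp only [Pi.add_apply, hb, Matrix.col_apply] at h
    linarith [h]
  have hA : A = !![-(VdA + D + qbro*(1-qbro)*Qc*(lma/lmb))/Vbro, (D + qbro*(1-qbro)*Qc*lba)/Vbro, 0, 0;
      D/VA, -(D + (1-qbro)*Qc*lba)/VA, (1-qbro)*Qc*qliv*lbl/VA, (1-qbro)*Qc*(1-qliv)*lbt/VA;
      qliv*(1-qbro)*Qc*qbro*(lma/lmb)/Vliv, qliv*(1-qbro)*Qc*(1-qbro)*lba/Vliv,
        -((kmet + qliv*(1-qbro)*Qc)*lbl)/Vliv, 0;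
      (1-qliv)*(1-qbro)*Qc*qbro*(lma/lmb)/Vtis, (1-qliv)*(1-qbro)*Qc*(1-qbro)*lba/Vtis, 0,
        -((1-qliv)*(1-qbro)*Qc*lbt)/Vtis] := by
    ext i j
    rw [hent]
    fin_cases i <;> fin_cases j <;>
      (simp +decide [acetoneRHS, Pi.single_apply]; try ring)
  clear hent hb hAb
  have h1b : (0:ℝ) ≤ 1 - qbro := by linarith
  have h1l : (0:ℝ) ≤ 1 - qliv := by linarith
  have hP : (0:ℝ) ≤ lma/lmb := div_nonneg hlma.le hlmb.le
  -- Off-diagonal entries of `A` are nonnegative.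
  have hoff : ∀ i j, i ≠ j → 0 ≤ A i j := by
    intro i j hij
    rw [hA]
    fin_cases i <;> fin_cases j <;> first
      | (exact absurd rfl hij)
      | (simp only [Matrix.cons_val', Matrix.cons_val_zero, Matrix.cons_val_one,
          Matrix.head_cons, Matrix.head_fin_const, Matrix.empty_val',
          Matrix.cons_val_fin_one, Matrix.of_apply, Matrix.cons_val_two, Matrix.cons_val_three,
          Matrix.tail_cons]
         first
          | exact le_rfl
          | (refine div_nonneg ?_ (by linarith)
             nlinarith [mul_nonneg (mul_nonneg (mul_nonneg hqbro0 h1b) hQc) hlba.le,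
               mul_nonneg (mul_nonneg (mul_nonneg h1b hQc) hqliv0.le) hlbl.le,
               mul_nonneg (mul_nonneg (mul_nonneg h1b hQc) h1l) hlbt.le,
               mul_nonneg (mul_nonneg (mul_nonneg (mul_nonneg hqliv0.le h1b) hQc) hqbro0) hP,
               mul_nonneg (mul_nonneg (mul_nonneg (mul_nonneg hqliv0.le h1b) hQc) h1b) hlba.le,
               mul_nonneg (mul_nonneg (mul_nonneg (mul_nonneg h1l h1b) hQc) hqbro0) hP,
               mul_nonneg (mul_nonneg (mul_nonneg (mul_nonneg h1l h1b) hQc) h1b) hlba.le]))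
  -- Weighted column sums are nonpositive (weights = compartment volumes).
  have hw : ∀ i, 0 < (![Vbro, VA, Vliv, Vtis] : Fin 4 → ℝ) i := by
    intro i; fin_cases i <;> assumption
  have hcol : ∀ j, ∑ i, (![Vbro, VA, Vliv, Vtis] : Fin 4 → ℝ) i * A i j ≤ 0 := by
    intro j
    have hVbro' := hVbro.ne'
    have hVA' := hVA.ne'
    have hVliv' := hVliv.ne'
    have hVtis' := hVtis.ne'
    have e0 : ∑ i, (![Vbro, VA, Vliv, Vtis] : Fin 4 → ℝ) i * A i 0 = -VdA := by
      rw [Fin.sum_univ_four, hA]; simp; field_simp; ring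
    have e1 : ∑ i, (![Vbro, VA, Vliv, Vtis] : Fin 4 → ℝ) i * A i 1 = 0 := by
      rw [Fin.sum_univ_four, hA]; simp; field_simp; ring
    have e2 : ∑ i, (![Vbro, VA, Vliv, Vtis] : Fin 4 → ℝ) i * A i 2 = -(kmet*lbl) := by
      rw [Fin.sum_univ_four, hA]; simp; field_simp; ring
    have e3 : ∑ i, (![Vbro, VA, Vliv, Vtis] : Fin 4 → ℝ) i * A i 3 = 0 := by
      rw [Fin.sum_univ_four, hA]; simp; field_simp; ring
    fin_cases j
    · exact le_trans (le_of_eq e0) (by linarith)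
    · exact le_of_eq e1
    · exact le_trans (le_of_eq e2) (by nlinarith [mul_nonneg hkmet hlbl.le])
    · exact le_of_eq e3
  clear hA
  -- From an eigenpair of `A` (complexified), obtain an eigenpair of `Aᵀ` and apply the
  -- Gershgorin-type lemma.
  have main : ∀ μ : ℂ, (∃ v : Fin 4 → ℂ, v ≠ 0 ∧ (A.map Complex.ofReal) *ᵥ v = μ • v) →
      μ.re ≤ 0 ∧ (μ.re = 0 → A.det = 0) := by
    intro μ ⟨v, hv0, hv⟩
    have hdet0 : ((A.map Complex.ofReal) - μ • 1).det = 0 := by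
      rw [← Matrix.exists_mulVec_eq_zero_iff]
      exact ⟨v, hv0, by
        rw [Matrix.sub_mulVec, Matrix.smul_mulVec, Matrix.one_mulVec, hv, sub_self]⟩
    have hdetT : (((A.map Complex.ofReal) - μ • 1)ᵀ).det = 0 := by
      rw [Matrix.det_transpose]; exact hdet0
    obtain ⟨u, hu0, huv⟩ := Matrix.exists_mulVec_eq_zero_iff.mpr hdetT
    have huv' : (A.map Complex.ofReal)ᵀ *ᵥ u = μ • u := by
      have h := huv
      rw [Matrix.transpose_sub, Matrix.transpose_smul, Matrix.transpose_one,
        Matrix.sub_mulVec, Matrix.smul_mulVec, Matrix.one_mulVec, sub_eq_zero] at h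
      exact h
    have heig : ∀ i, ∑ j, ((A j i : ℂ)) * u j = μ * u i := by
      intro i
      have h2 := congrFun huv' i
      simpa [Matrix.mulVec, dotProduct, Matrix.transpose_apply, Matrix.map_apply,
        Pi.smul_apply, smul_eq_mul] using h2
    have hk := metzler_column_dominant_eigen_re_nonpos A ![Vbro, VA, Vliv, Vtis]
      hw hoff hcol μ u hu0 heig
    refine ⟨hk.1, fun h0 => ?_⟩
    have hmu : μ = 0 := hk.2 h0
    have hdetA : ((A.map Complex.ofReal)).det = 0 := by
      rw [← Matrix.exists_mulVec_eq_zero_iff]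
      exact ⟨v, hv0, by rw [hv, hmu, zero_smul]⟩
    have : (Complex.ofRealHom) A.det = 0 := by
      rw [RingHom.map_det]
      exact hdetA
    rw [Complex.ofRealHom_eq_coe] at this
    exact_mod_cast this
  constructor
  · exact fun μ h => (main μ h).1
  · intro hdet μ h
    rcases lt_or_eq_of_le (main μ h).1 with h1 | h1
    · exact h1
    · exact absurd ((main μ h).2 h1) hdet
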